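/- (L'Hôpital limit used for integrability of the majorant.) Let a, s, β > 0 and c ∈ ℝ be constants. Then lim_{y→0⁺} ( ∫_y^β e^{a/(s²·w)}·w^c dw ) / ( e^{a/(s²·y)}·y^{c+2} ) = s²/a. In particular this holds for c = b/s² + (a+s²)/(2βs²) with b > 0. -/

import Mathlib

open MeasureTheory Real Set Filter
open scoped Topology

private lemma aux_uIcc_subset {x z : ℝ} (hx : 0 < x) (hz : 0 < z) :
    Set.uIcc x z ⊆ Set.Ioi 0 := by
  intro w hw
  rcases Set.mem_uIcc.mp hw with h | h
  · exact lt_of_lt_of_le hx h.1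
  · exact lt_of_lt_of_le hz h.1

private lemma aux_contOn (k c : ℝ) :
    ContinuousOn (fun w : ℝ => Real.exp (k / w) * w ^ c) (Set.Ioi 0) := by
  apply ContinuousOn.mul
  · exact Real.continuous_exp.comp_continuousOn
      (continuousOn_const.div continuousOn_id fun w hw => ne_of_gt hw)
  · exact ContinuousOn.rpow_const continuousOn_id fun w hw => Or.inl (ne_of_gt hw)

private lemma aux_intble (k c : ℝ) {x z : ℝ} (hx : 0 < x) (hz : 0 < z) :
    IntervalIntegrable (fun w : ℝ => Real.exp (k / w) * w ^ c) volume x z :=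
  ((aux_contOn k c).mono (aux_uIcc_subset hx hz)).intervalIntegrable

private lemma aux_deriv (k c : ℝ) {w : ℝ} (hw : 0 < w) :
    HasDerivAt (fun w : ℝ => Real.exp (k / w) * w ^ (c + 2))
      (Real.exp (k / w) * w ^ c * ((c + 2) * w - k)) w := by
  have h0 : w ≠ 0 := ne_of_gt hw
  have h1 : HasDerivAt (fun x : ℝ => k / x) (-(k / w ^ 2)) w := by
    simpa [div_eq_mul_inv] using (hasDerivAt_inv h0).const_mul k
  have h2 : HasDerivAt (fun x : ℝ => Real.exp (k / x))
      (Real.exp (k / w) * -(k / w ^ 2)) w := h1.exp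
  have h3 : HasDerivAt (fun x : ℝ => x ^ (c + 2)) ((c + 2) * w ^ (c + 2 - 1)) w :=
    Real.hasDerivAt_rpow_const (Or.inl h0)
  have h4 := h2.mul h3
  refine h4.congr_deriv ?_
  have e1 : w ^ (c + 2) = w ^ c * w ^ (2 : ℕ) := by
    rw [← Real.rpow_natCast w 2, ← Real.rpow_add hw]; norm_num
  have e2 : w ^ (c + 2 - 1) = w ^ c * w := by
    rw [show c + 2 - 1 = c + 1 by ring, Real.rpow_add_one h0]
  rw [e1, e2]
  field_simp
  ring

private lemma aux_atTop (k c : ℝ) (hk : 0 < k) :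
    Tendsto (fun y : ℝ => Real.exp (k / y) * y ^ c) (𝓝[>] (0:ℝ)) atTop := by
  have hlog : Tendsto (fun y : ℝ => y * Real.log y) (𝓝[>] (0:ℝ)) (𝓝 0) := by
    have := tendsto_log_mul_rpow_nhdsGT_zero (r := 1) one_pos
    simp only [Real.rpow_one] at this
    simpa [mul_comm] using this
  have hinner : Tendsto (fun y : ℝ => k + c * (y * Real.log y)) (𝓝[>] (0:ℝ)) (𝓝 k) := by
    simpa using tendsto_const_nhds.add (hlog.const_mul c)
  have hinv : Tendsto (fun y : ℝ => y⁻¹) (𝓝[>] (0:ℝ)) atTop := tendsto_inv_nhdsGT_zero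
  have hmul := hinv.atTop_mul_pos hk hinner
  have hexp := Real.tendsto_exp_atTop.comp hmul
  apply hexp.congr'
  filter_upwards [eventually_mem_nhdsWithin] with y (hy : y ∈ Set.Ioi (0:ℝ))
  have hy0 : (0:ℝ) < y := hy
  show Real.exp (y⁻¹ * (k + c * (y * Real.log y))) = Real.exp (k / y) * y ^ c
  rw [Real.rpow_def_of_pos hy0, ← Real.exp_add]
  congr 1
  field_simp

private lemma aux_main (k c β : ℝ) (hk : 0 < k) (hβ : 0 < β) :
    Tendsto (fun y : ℝ =>
        (∫ w in y..β, Real.exp (k / w) * w ^ c) / (Real.exp (k / y) * y ^ (c + 2)))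
      (𝓝[>] (0:ℝ)) (𝓝 (1 / k)) := by
  set f : ℝ → ℝ := fun w => Real.exp (k / w) * w ^ c with hf
  set φ : ℝ → ℝ := fun y => Real.exp (k / y) * y ^ (c + 2) with hφ
  have hfpos : ∀ w : ℝ, 0 < w → 0 < f w := fun w hw =>
    mul_pos (Real.exp_pos _) (Real.rpow_pos_of_pos hw _)
  rw [Metric.tendsto_nhds]
  intro ε hε
  set m := |c + 2| with hm
  have hm0 : 0 ≤ m := abs_nonneg _
  have hm1 : (0:ℝ) < m + 1 := by linarith
  set δ := min β (min (k / 2) (ε * k ^ 2 / 4) / (m + 1)) with hδdef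
  have hδpos : 0 < δ := lt_min hβ (div_pos (lt_min (by linarith) (by positivity)) hm1)
  have hδβ : δ ≤ β := min_le_left _ _
  have hδle : δ ≤ min (k / 2) (ε * k ^ 2 / 4) / (m + 1) := min_le_right _ _
  have hδ2 : (m + 1) * δ ≤ k / 2 := by
    have h1 : (m + 1) * δ ≤ (m + 1) * (min (k / 2) (ε * k ^ 2 / 4) / (m + 1)) :=
      mul_le_mul_of_nonneg_left hδle (by linarith)
    have h2 : (m + 1) * (min (k / 2) (ε * k ^ 2 / 4) / (m + 1)) = min (k / 2) (ε * k ^ 2 / 4) := by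
      field_simp
    calc (m + 1) * δ ≤ _ := h1
      _ = _ := h2
      _ ≤ k / 2 := min_le_left _ _
  have hδ3 : (m + 1) * δ ≤ ε * k ^ 2 / 4 := by
    have h1 : (m + 1) * δ ≤ (m + 1) * (min (k / 2) (ε * k ^ 2 / 4) / (m + 1)) :=
      mul_le_mul_of_nonneg_left hδle (by linarith)
    have h2 : (m + 1) * (min (k / 2) (ε * k ^ 2 / 4) / (m + 1)) = min (k / 2) (ε * k ^ 2 / 4) := by
      field_simp
    calc (m + 1) * δ ≤ _ := h1
      _ = _ := h2
      _ ≤ ε * k ^ 2 / 4 := min_le_right _ _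
  set e := m * δ with he_def
  have he0 : 0 ≤ e := mul_nonneg hm0 hδpos.le
  have heme : e ≤ (m + 1) * δ := by nlinarith
  have hek : e ≤ k / 2 := le_trans heme hδ2
  have he4 : e ≤ ε * k ^ 2 / 4 := le_trans heme hδ3
  have hke : 0 < k - e := by linarith
  have hkep : 0 < k + e := by linarith
  clear_value m
  clear_value δ
  clear_value e
  set C := ∫ w in δ..β, f w with hC_def
  have hC0 : 0 ≤ C := intervalIntegral.integral_nonneg hδβ
    (fun w hw => (hfpos w (lt_of_lt_of_le hδpos hw.1)).le)
  have hφtop : Tendsto φ (𝓝[>] (0:ℝ)) atTop := aux_atTop k (c + 2) hk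
  have hφδ : 0 < φ δ := mul_pos (Real.exp_pos _) (Real.rpow_pos_of_pos hδpos _)
  have Ev1 : ∀ᶠ y in 𝓝[>] (0:ℝ), 0 < y := eventually_mem_nhdsWithin
  have Ev2 : ∀ᶠ y in 𝓝[>] (0:ℝ), y < δ :=
    eventually_nhdsWithin_of_eventually_nhds (eventually_lt_nhds hδpos)
  have Ev3 : ∀ᶠ y in 𝓝[>] (0:ℝ), C / φ y < ε / 4 :=
    (tendsto_const_nhds.div_atTop hφtop).eventually_lt_const (by linarith)
  have Ev4 : ∀ᶠ y in 𝓝[>] (0:ℝ), (φ δ / (k + e)) / φ y < ε / 4 :=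
    (tendsto_const_nhds.div_atTop hφtop).eventually_lt_const (by linarith)
  have Ev5 : ∀ᶠ y in 𝓝[>] (0:ℝ), 0 < φ y := hφtop.eventually (eventually_gt_atTop 0)
  filter_upwards [Ev1, Ev2, Ev3, Ev4, Ev5] with y hy0 hyδ h3 h4 hP
  have hyδ' : y ≤ δ := hyδ.le
  have hint1 : IntervalIntegrable f volume y δ := aux_intble k c hy0 hδpos
  have hint2 : IntervalIntegrable f volume δ β := aux_intble k c hδpos hβ
  set I := ∫ w in y..δ, f w with hI_def
  have hsplit : (∫ w in y..β, f w) = I + C :=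
    (intervalIntegral.integral_add_adjacent_intervals hint1 hint2).symm
  -- FTC
  have hcont_g : ContinuousOn (fun w : ℝ => f w * ((c + 2) * w - k)) (Set.Ioi 0) :=
    (aux_contOn k c).mul (by fun_prop)
  have hg_int : IntervalIntegrable (fun w : ℝ => f w * ((c + 2) * w - k)) volume y δ :=
    (hcont_g.mono (aux_uIcc_subset hy0 hδpos)).intervalIntegrable
  have hFTC : (∫ w in y..δ, f w * ((c + 2) * w - k)) = φ δ - φ y := by
    apply intervalIntegral.integral_eq_sub_of_hasDerivAt
    · intro w hw
      exact aux_deriv k c (aux_uIcc_subset hy0 hδpos hw)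
    · exact hg_int
  have hFTC' : (∫ w in y..δ, f w * (k - (c + 2) * w)) = φ y - φ δ := by
    have hfun : (fun w : ℝ => f w * (k - (c + 2) * w))
        = fun w : ℝ => -(f w * ((c + 2) * w - k)) := by funext w; ring
    rw [hfun, intervalIntegral.integral_neg, hFTC]; ring
  have hg_int' : IntervalIntegrable (fun w : ℝ => f w * (k - (c + 2) * w)) volume y δ := by
    have hfun : (fun w : ℝ => f w * (k - (c + 2) * w))
        = fun w : ℝ => -(f w * ((c + 2) * w - k)) := by funext w; ring
    rw [hfun]; exact hg_int.neg
  have hpt : ∀ w ∈ Set.Icc y δ,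
      f w * (k - e) ≤ f w * (k - (c + 2) * w) ∧ f w * (k - (c + 2) * w) ≤ f w * (k + e) := by
    intro w hw
    have hw0 : 0 < w := lt_of_lt_of_le hy0 hw.1
    have habs : |(c + 2) * w| ≤ e := by
      rw [abs_mul, abs_of_pos hw0, ← hm, he_def]
      exact mul_le_mul_of_nonneg_left hw.2 hm0
    have h1 := abs_le.mp habs
    have hfw := (hfpos w hw0).le
    exact ⟨mul_le_mul_of_nonneg_left (by linarith [h1.2]) hfw,
      mul_le_mul_of_nonneg_left (by linarith [h1.1]) hfw⟩
  have hmono1 : I * (k - e) ≤ φ y - φ δ := by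
    have h1 : (∫ w in y..δ, f w * (k - e)) ≤ ∫ w in y..δ, f w * (k - (c + 2) * w) :=
      intervalIntegral.integral_mono_on hyδ' (hint1.mul_const _) hg_int'
        (fun w hw => (hpt w hw).1)
    rwa [intervalIntegral.integral_mul_const, hFTC'] at h1
  have hmono2 : φ y - φ δ ≤ I * (k + e) := by
    have h1 : (∫ w in y..δ, f w * (k - (c + 2) * w)) ≤ ∫ w in y..δ, f w * (k + e) :=
      intervalIntegral.integral_mono_on hyδ' hg_int' (hint1.mul_const _)
        (fun w hw => (hpt w hw).2)
    rwa [intervalIntegral.integral_mul_const, hFTC'] at h1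
  -- final arithmetic
  have hIP_up : I / φ y ≤ 1 / (k - e) := by
    rw [div_le_div_iff₀ hP hke]
    nlinarith [hφδ]
  have hIP_lo : 1 / (k + e) - φ δ / ((k + e) * φ y) ≤ I / φ y := by
    have h5 : (φ y - φ δ) / (k + e) ≤ I := (div_le_iff₀ hkep).2 hmono2
    have h6 : ((φ y - φ δ) / (k + e)) / φ y ≤ I / φ y := by
      apply div_le_div_of_nonneg_right h5 hP.le
    calc 1 / (k + e) - φ δ / ((k + e) * φ y) = ((φ y - φ δ) / (k + e)) / φ y := by
          field_simp
      _ ≤ I / φ y := h6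
  have hb1 : 1 / (k - e) - 1 / k ≤ ε / 2 := by
    have h : 1 / (k - e) - 1 / k = e / ((k - e) * k) := by
      field_simp
      ring
    rw [h, div_le_iff₀ (by positivity)]
    linarith [he4, mul_nonneg (mul_nonneg hε.le hk.le) (show 0 ≤ k / 2 - e by linarith)]
  have hb2 : 1 / k - 1 / (k + e) ≤ ε / 2 := by
    have h : 1 / k - 1 / (k + e) = e / (k * (k + e)) := by
      field_simp
      ring
    rw [h, div_le_iff₀ (by positivity)]
    linarith [he4, mul_nonneg (mul_nonneg hε.le hk.le) he0,
      mul_nonneg (mul_nonneg hε.le hk.le) hk.le]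
  have hCP : 0 ≤ C / φ y := div_nonneg hC0 hP.le
  rw [hsplit, Real.dist_eq, abs_lt]
  rw [add_div]
  have h4' : φ δ / ((k + e) * φ y) < ε / 4 := by
    rwa [div_div] at h4
  constructor
  · linarith [hIP_lo, hb2, hCP, h4']
  · linarith [hIP_up, hb1, h3]

theorem statement4
    (a s β c : ℝ) (ha : 0 < a) (hs : 0 < s) (hβ : 0 < β) :
    Tendsto
      (fun y : ℝ =>
        (∫ w in y..β, Real.exp (a / (s ^ 2 * w)) * w ^ c) /
          (Real.exp (a / (s ^ 2 * y)) * y ^ (c + 2)))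
      (𝓝[>] (0 : ℝ)) (𝓝 (s ^ 2 / a)) := by
  have hk : 0 < a / s ^ 2 := div_pos ha (by positivity)
  have hrw : s ^ 2 / a = 1 / (a / s ^ 2) := by
    rw [one_div_div]
  rw [hrw]
  have h := aux_main (a / s ^ 2) c β hk hβ
  have heq : (fun y : ℝ =>
        (∫ w in y..β, Real.exp (a / (s ^ 2 * w)) * w ^ c) /
          (Real.exp (a / (s ^ 2 * y)) * y ^ (c + 2)))
      = fun y : ℝ =>
        (∫ w in y..β, Real.exp (a / s ^ 2 / w) * w ^ c) /
          (Real.exp (a / s ^ 2 / y) * y ^ (c + 2)) := by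
    funext y
    simp only [div_div]
  rw [heq]
  exact h
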